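/- For every pair of integers r and k with r ≥ 2, k ≤ r and r+k even, there exist infinitely many triples (G, P, d) such that G is a graph with chromatic number at most r, P ⊆ V(G) with |D_G(P,2)| = 2(r+k−1), d : P → {1,...,r+k} is a proper coloring of G[P], and d cannot be extended to a proper coloring of G using at most (3r+k)/2 colors. -/

import Mathlib

/-- The set of unordered pairs of distinct vertices of `P` at distance at most `m` in `G`. -/
def pairsAtMost {V : Type*} (G : SimpleGraph V) (P : Set V) (m : ℕ) : Set (Sym2 V) :=
  {e | ∃ x y, e = s(x, y) ∧ x ∈ P ∧ y ∈ P ∧ x ≠ y ∧ ∃ p : G.Walk x y, p.length ≤ m}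

/-! ### Auxiliary construction for Statement 18.

The graph `S18G r M s` (with `M = r + k - 1`) consists of a complete `r`-partite graph
with parts indexed by `Fin r`, each part consisting of `M * s` vertices indexed by a
"type" in `Fin M` and a copy index in `Fin s`, together with `2 * (M + 1)` extra
precolored vertices: for each side `ε : Fin 2` a vertex `(ε, none)` (precolored `1`)
and vertices `(ε, some x)` (precolored `x + 2`).  A part-`j` vertex of type `x` is
adjacent to `(ε, none)` and `(ε, some x)` where `ε = S18side r j` (side `1` is the
last part, side `0` the other parts). -/

abbrev S18V (r M s : ℕ) : Type := (Fin r × Fin M × Fin s) ⊕ (Fin 2 × Option (Fin M))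

def S18side (r : ℕ) (j : Fin r) : Fin 2 := if j.val = r - 1 then 1 else 0

def S18Adj (r M s : ℕ) : S18V r M s → S18V r M s → Prop
  | .inl u, .inl v => u.1 ≠ v.1
  | .inl u, .inr p => (p.2 = none ∨ p.2 = some u.2.1) ∧ p.1 = S18side r u.1
  | .inr p, .inl u => (p.2 = none ∨ p.2 = some u.2.1) ∧ p.1 = S18side r u.1
  | .inr _, .inr _ => False

def S18G (r M s : ℕ) : SimpleGraph (S18V r M s) where
  Adj := S18Adj r M s
  symm := by
    constructor
    rintro (u | p) (v | q) h
    · exact Ne.symm h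
    · exact h
    · exact h
    · exact h
  loopless := by
    constructor
    rintro (u | p) h
    · exact h rfl
    · exact h

def S18d (r M s : ℕ) : S18V r M s → ℕ
  | .inr (_, some x) => x.val + 2
  | _ => 1

lemma S18card (r M s n : ℕ) (hr : 2 ≤ r) (hM : 1 ≤ M) (hs : s = n + 1) :
    n ≤ Fintype.card (S18V r M s) := by
  have hcard : Fintype.card (S18V r M s) = r * (M * s) + 2 * (M + 1) := by
    simp [S18V]
  have h1 : 1 * (1 * s) ≤ r * (M * s) :=
    Nat.mul_le_mul (by omega) (Nat.mul_le_mul (by omega) le_rfl)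
  simp at h1
  omega

lemma S18colorable (r M s : ℕ) (hr : 2 ≤ r) : (S18G r M s).Colorable r := by
  refine ⟨SimpleGraph.Coloring.mk (fun v => match v with
    | .inl u => u.1
    | .inr (ε, _) => if ε = 0 then ⟨r - 1, by omega⟩ else ⟨0, by omega⟩) ?_⟩
  rintro (⟨j, x, i⟩ | ⟨ε, o⟩) (⟨j', x', i'⟩ | ⟨ε', o'⟩) hadj heq
  · exact hadj heq
  · obtain ⟨-, hε⟩ := hadj
    simp only at heq
    by_cases hj : j.val = r - 1
    · have hs1 : S18side r j = 1 := by simp [S18side, hj]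
      rw [hs1] at hε; subst hε
      rw [if_neg (by decide)] at heq
      have := congrArg Fin.val heq
      simp at this; omega
    · have hs0 : S18side r j = 0 := by simp [S18side, hj]
      rw [hs0] at hε; subst hε
      rw [if_pos rfl] at heq
      have := congrArg Fin.val heq
      simp at this; omega
  · obtain ⟨-, hε⟩ := hadj
    simp only at heq
    by_cases hj : j'.val = r - 1
    · have hs1 : S18side r j' = 1 := by simp [S18side, hj]
      rw [hs1] at hε; subst hε
      rw [if_neg (by decide)] at heq
      have := congrArg Fin.val heq
      simp at this; omega
    · have hs0 : S18side r j' = 0 := by simp [S18side, hj]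
      rw [hs0] at hε; subst hε
      rw [if_pos rfl] at heq
      have := congrArg Fin.val heq
      simp at this; omega
  · exact hadj

lemma S18pairs (r M s : ℕ) (hr : 2 ≤ r) (hM : 1 ≤ M) (hs : 1 ≤ s) :
    (pairsAtMost (S18G r M s) (Set.range Sum.inr) 2).ncard = 2 * M := by
  classical
  set g : Fin 2 × Fin M → Sym2 (S18V r M s) :=
    fun q => s(Sum.inr (q.1, none), Sum.inr (q.1, some q.2)) with hg
  have hset : pairsAtMost (S18G r M s) (Set.range Sum.inr) 2 = Set.range g := by
    ext e
    constructor
    · rintro ⟨x, y, rfl, ⟨p1, rfl⟩, ⟨p2, rfl⟩, hxy, w, hw⟩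
      cases w with
      | nil => exact absurd rfl hxy
      | cons h q =>
        cases q with
        | nil => exact h.elim
        | cons h2 q2 =>
          cases q2 with
          | cons h3 q3 => simp [SimpleGraph.Walk.length_cons] at hw
          | nil =>
            rename_i b
            obtain (⟨j, x, i⟩ | pp) := b
            · obtain ⟨ho1, hε1⟩ := h
              obtain ⟨ho2, hε2⟩ := h2
              obtain ⟨ε1, o1⟩ := p1
              obtain ⟨ε2, o2⟩ := p2
              simp only at ho1 hε1 ho2 hε2
              subst hε1; subst hε2
              rcases ho1 with h1 | h1 <;> rcases ho2 with h2' | h2' <;> subst h1 <;> subst h2'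
              · exact absurd rfl hxy
              · exact ⟨(S18side r j, x), rfl⟩
              · exact ⟨(S18side r j, x), Sym2.eq_swap⟩
              · exact absurd rfl hxy
            · exact h.elim
    · rintro ⟨⟨ε, y⟩, rfl⟩
      have hj : ∃ j : Fin r, S18side r j = ε := by
        by_cases hε : ε = 0
        · exact ⟨⟨0, by omega⟩, by subst hε; simp [S18side]; omega⟩
        · refine ⟨⟨r - 1, by omega⟩, ?_⟩
          have : ε = 1 := by omega
          subst this; simp [S18side]
      obtain ⟨j, hj⟩ := hj
      have adj1 : (S18G r M s).Adj (Sum.inr (ε, none)) (Sum.inl (j, y, ⟨0, hs⟩)) :=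
        ⟨Or.inl rfl, hj.symm⟩
      have adj2 : (S18G r M s).Adj (Sum.inl (j, y, ⟨0, hs⟩)) (Sum.inr (ε, some y)) :=
        ⟨Or.inr rfl, hj.symm⟩
      refine ⟨_, _, rfl, ⟨_, rfl⟩, ⟨_, rfl⟩, by simp, ?_⟩
      exact ⟨SimpleGraph.Walk.cons adj1 adj2.toWalk, by simp⟩
  have ginj : Function.Injective g := by
    rintro ⟨a1, a2⟩ ⟨b1, b2⟩ h
    simp only [hg, Sym2.eq, Sym2.rel_iff', Prod.mk.injEq, Sum.inr.injEq] at h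
    simp_all
  rw [hset, ← Set.image_univ, Set.ncard_image_of_injective _ ginj]
  simp [Set.ncard_univ, Nat.card_eq_fintype_card]

lemma S18noext (r k M s : ℕ) (hr : 2 ≤ r) (hk : 1 ≤ k) (hkr : k ≤ r) (heven : Even (r + k))
    (hM : M = r + k - 1) (hs : 1 ≤ s)
    (f : S18V r M s → ℕ)
    (hadjf : ∀ u v, (S18G r M s).Adj u v → f u ≠ f v)
    (hbf : ∀ v, 1 ≤ f v ∧ 2 * f v ≤ 3 * r + k)
    (hP : ∀ x ∈ Set.range (Sum.inr : (Fin 2 × Option (Fin M)) → S18V r M s),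
      f x = S18d r M s x) : False := by
  classical
  obtain ⟨t2, ht2⟩ := heven
  have hfa : ∀ ε : Fin 2, f (Sum.inr (ε, none)) = 1 := fun ε => by
    simpa [S18d] using hP _ ⟨(ε, none), rfl⟩
  have hfb : ∀ (ε : Fin 2) (x : Fin M), f (Sum.inr (ε, some x)) = x.val + 2 := fun ε x => by
    simpa [S18d] using hP _ ⟨(ε, some x), rfl⟩
  have hcross : ∀ (j j' : Fin r) (x x' : Fin M) (i i' : Fin s), j ≠ j' →
      f (Sum.inl (j, x, i)) ≠ f (Sum.inl (j', x', i')) := by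
    intro j j' x x' i i' hne
    exact hadjf _ _ hne
  have h1 : ∀ (j : Fin r) (x : Fin M) (i : Fin s), f (Sum.inl (j, x, i)) ≠ 1 := by
    intro j x i heq
    have hadj : (S18G r M s).Adj (Sum.inl (j, x, i)) (Sum.inr (S18side r j, none)) :=
      ⟨Or.inl rfl, rfl⟩
    exact hadjf _ _ hadj (by rw [heq, hfa])
  have hx2 : ∀ (j : Fin r) (x : Fin M) (i : Fin s), f (Sum.inl (j, x, i)) ≠ x.val + 2 := by
    intro j x i heq
    have hadj : (S18G r M s).Adj (Sum.inl (j, x, i)) (Sum.inr (S18side r j, some x)) :=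
      ⟨Or.inr rfl, rfl⟩
    exact hadjf _ _ hadj (by rw [heq, hfb])
  have hM1 : 1 ≤ M := by omega
  set i0 : Fin s := ⟨0, hs⟩ with hi0
  set x0 : Fin M := ⟨0, hM1⟩ with hx0
  set c : Fin r → ℕ := fun j => f (Sum.inl (j, x0, i0)) with hc
  set idx : Fin r → Fin M := fun j => ⟨min (c j - 2) (M - 1), by omega⟩ with hidx
  set e : Fin r → ℕ := fun j => f (Sum.inl (j, idx j, i0)) with he
  have hc2 : ∀ j, 2 ≤ c j := fun j => by
    have ha := (hbf (Sum.inl (j, x0, i0))).1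
    have hb := h1 j x0 i0
    simp only [hc]; omega
  have hcB : ∀ j, 2 * c j ≤ 3 * r + k := fun j => (hbf _).2
  have he2 : ∀ j, 2 ≤ e j := fun j => by
    have ha := (hbf (Sum.inl (j, idx j, i0))).1
    have hb := h1 j (idx j) i0
    simp only [he]; omega
  have heB : ∀ j, 2 * e j ≤ 3 * r + k := fun j => (hbf _).2
  have hene : ∀ j, c j ≤ r + k → e j ≠ c j := by
    intro j hle heq
    have h2 := hc2 j
    have hidxv : (idx j).val = c j - 2 := by
      simp only [hidx]
      omega
    apply hx2 j (idx j) i0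
    have : (idx j).val + 2 = c j := by omega
    rw [this]
    exact heq
  set J : Finset (Fin r) :=
    Finset.univ.filter (fun j => r + k + 1 ≤ c j ∨ r + k + 1 ≤ e j) with hJdef
  set cF : Fin r → ℕ := fun j => if r + k + 1 ≤ c j then c j else e j with hcF
  have hrepr : ∀ j, ∃ x : Fin M, cF j = f (Sum.inl (j, x, i0)) := by
    intro j
    by_cases h : r + k + 1 ≤ c j
    · exact ⟨x0, by exact if_pos h⟩
    · exact ⟨idx j, by exact if_neg h⟩
  have hinj : Set.InjOn cF J := by
    intro j hj j' hj' heq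
    by_contra hne
    obtain ⟨x, hxe⟩ := hrepr j
    obtain ⟨x', hxe'⟩ := hrepr j'
    exact hcross j j' x x' i0 i0 hne (by rw [← hxe, ← hxe', heq])
  have hmaps : ∀ j ∈ J, cF j ∈ Finset.Icc (r + k + 1) ((3 * r + k) / 2) := by
    intro j hj
    simp only [hJdef, Finset.mem_filter, Finset.mem_univ, true_and] at hj
    simp only [Finset.mem_Icc, hcF]
    have h1' := hcB j
    have h2' := heB j
    by_cases h : r + k + 1 ≤ c j
    · simp only [if_pos h]; omega
    · simp only [if_neg h]; omega
  have hJcard : J.card ≤ (3 * r + k) / 2 - (r + k) := by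
    have hle := Finset.card_le_card_of_injOn cF hmaps hinj
    rw [Nat.card_Icc] at hle
    omega
  have hmem : ∀ j ∈ Jᶜ, c j ≤ r + k ∧ e j ≤ r + k := by
    intro j hj
    simp only [Finset.mem_compl, hJdef, Finset.mem_filter, Finset.mem_univ, true_and,
      not_or, not_le] at hj
    omega
  have hpairdisj : ∀ j ∈ Jᶜ, ∀ j' ∈ Jᶜ, j ≠ j' →
      Disjoint ({c j, e j} : Finset ℕ) {c j', e j'} := by
    intro j _ j' _ hne
    rw [Finset.disjoint_left]
    intro a ha hb
    simp only [Finset.mem_insert, Finset.mem_singleton] at ha hb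
    have this1 : ∀ b : ℕ, (b = c j ∨ b = e j) → ∃ x : Fin M, b = f (Sum.inl (j, x, i0)) := by
      rintro b (rfl | rfl)
      · exact ⟨x0, by simp [hc]⟩
      · exact ⟨idx j, by simp [he]⟩
    have this2 : ∀ b : ℕ, (b = c j' ∨ b = e j') → ∃ x : Fin M, b = f (Sum.inl (j', x, i0)) := by
      rintro b (rfl | rfl)
      · exact ⟨x0, by simp [hc]⟩
      · exact ⟨idx j', by simp [he]⟩
    obtain ⟨x, hxe⟩ := this1 a ha
    obtain ⟨x', hxe'⟩ := this2 a hb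
    exact hcross j j' x x' i0 i0 hne (by rw [← hxe, ← hxe'])
  have hbU : Jᶜ.biUnion (fun j => ({c j, e j} : Finset ℕ)) ⊆ Finset.Icc 2 (r + k) := by
    intro a ha
    simp only [Finset.mem_biUnion] at ha
    obtain ⟨j, hj, ha⟩ := ha
    simp only [Finset.mem_insert, Finset.mem_singleton] at ha
    have h1' := hmem j hj
    have h2' := hc2 j
    have h3' := he2 j
    simp only [Finset.mem_Icc]
    rcases ha with rfl | rfl <;> omega
  have hcount : 2 * Jᶜ.card ≤ r + k - 1 := by
    have hcardU := Finset.card_biUnion hpairdisj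
    have hsum : ∑ j ∈ Jᶜ, ({c j, e j} : Finset ℕ).card = 2 * Jᶜ.card := by
      rw [Finset.sum_congr rfl (fun j hj => Finset.card_pair (Ne.symm (hene j (hmem j hj).1)))]
      simp [Finset.sum_const, Nat.smul_one_eq_cast]
      ring
    have hle := Finset.card_le_card hbU
    rw [hcardU, hsum, Nat.card_Icc] at hle
    omega
  have htot : J.card + Jᶜ.card = r := by
    rw [Finset.card_add_card_compl]
    simp
  omega

/-- sharpness for r+k even: there are triples (G,P,d) of unboundedly
large order with |D_G(P,2)| = 2(r+k-1) whose precoloring does not extend to a coloring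
with at most (3r+k)/2 colors (colors c with 2c ≤ 3r+k). -/
theorem stmt_18 (r k : ℕ) (hr : 2 ≤ r) (hk : 1 ≤ k) (hkr : k ≤ r)
    (heven : Even (r + k)) :
    ∀ n : ℕ, ∃ (V : Type) (_ : Fintype V) (G : SimpleGraph V) (P : Set V) (d : V → ℕ),
      n ≤ Fintype.card V ∧
      G.chromaticNumber ≤ r ∧
      (pairsAtMost G P 2).ncard = 2 * (r + k - 1) ∧
      (∀ x ∈ P, ∀ y ∈ P, G.Adj x y → d x ≠ d y) ∧
      (∀ x ∈ P, d x ∈ Finset.Icc 1 (r + k)) ∧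
      ¬ ∃ f : V → ℕ, (∀ u v, G.Adj u v → f u ≠ f v) ∧
          (∀ v, 1 ≤ f v ∧ 2 * f v ≤ 3 * r + k) ∧ ∀ x ∈ P, f x = d x := by
  intro n
  have hM : 1 ≤ r + k - 1 := by omega
  refine ⟨S18V r (r + k - 1) (n + 1), inferInstance, S18G r (r + k - 1) (n + 1),
    Set.range Sum.inr, S18d r (r + k - 1) (n + 1), ?_, ?_, ?_, ?_, ?_, ?_⟩
  · exact S18card r (r + k - 1) (n + 1) n hr hM rfl
  · exact (S18colorable r (r + k - 1) (n + 1) hr).chromaticNumber_le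
  · exact S18pairs r (r + k - 1) (n + 1) hr hM (by omega)
  · rintro x ⟨p, rfl⟩ y ⟨q, rfl⟩ hadj
    exact hadj.elim
  · rintro x ⟨⟨ε, o⟩, rfl⟩
    cases o with
    | none => simp [S18d, Finset.mem_Icc]; omega
    | some x => simp [S18d, Finset.mem_Icc]; omega
  · rintro ⟨f, hadjf, hbf, hP⟩
    exact S18noext r k (r + k - 1) (n + 1) hr hk hkr heven rfl (by omega) f hadjf hbf hP
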